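/- Let X be a 3×3 complex matrix unitarily similar to the matrix with rows (0, 2a, 2b), (0, 2c, 2d), (0, 0, 0), for complex numbers a, b, c, d. Then for any unit complex number w, the characteristic polynomial of Φ(w̄ X) = (1/2)(w̄ X + w X*) in the variable λ equals −λ³ + 2λ² Re(w̄ c) + (|a|² + |d|² + |b|²) λ + 2 Re(w̄ (a d b̄ − c |b|²)). -/

import Mathlib

open Matrix

/-- The Hermitian part `Φ(A) = (A + A*)/2`. -/
noncomputable def hermPart {n : ℕ} (A : Matrix (Fin n) (Fin n) ℂ) :
    Matrix (Fin n) (Fin n) ℂ :=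
  (1 / 2 : ℂ) • (A + Aᴴ)

set_option maxHeartbeats 1000000 in
theorem charpoly_of_disk_form (a b c d : ℂ) (X : Matrix (Fin 3) (Fin 3) ℂ)
    (hX : ∃ U ∈ Matrix.unitaryGroup (Fin 3) ℂ,
      X = U * !![0, 2 * a, 2 * b; 0, 2 * c, 2 * d; 0, 0, 0] * Uᴴ)
    (w : ℂ) (hw : ‖w‖ = 1) (lam : ℂ) :
    (hermPart ((starRingEnd ℂ w) • X) - lam • (1 : Matrix (Fin 3) (Fin 3) ℂ)).det
      = -lam ^ 3 + 2 * lam ^ 2 * (((starRingEnd ℂ w * c).re : ℝ) : ℂ)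
        + ((‖a‖ ^ 2 + ‖d‖ ^ 2 + ‖b‖ ^ 2 : ℝ) : ℂ) * lam
        + 2 * (((starRingEnd ℂ w *
            (a * d * starRingEnd ℂ b - c * ((‖b‖ : ℂ)) ^ 2)).re : ℝ) : ℂ) := by
  obtain ⟨U, hU, rfl⟩ := hX
  set E := !![0, 2 * a, 2 * b; 0, 2 * c, 2 * d; (0:ℂ), 0, 0] with hE
  have hUU : Uᴴ * U = 1 := (mem_unitaryGroup_iff'.mp hU)
  have hUU' : U * Uᴴ = 1 := (mem_unitaryGroup_iff.mp hU)
  have key : hermPart ((starRingEnd ℂ w) • (U * E * Uᴴ)) - lam • 1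
      = U * (hermPart ((starRingEnd ℂ w) • E) - lam • 1) * Uᴴ := by
    simp only [hermPart, Matrix.mul_sub, Matrix.sub_mul, Matrix.mul_smul, Matrix.smul_mul,
      Matrix.mul_add, Matrix.add_mul, conjTranspose_smul, conjTranspose_mul,
      conjTranspose_conjTranspose, Matrix.mul_assoc, Matrix.one_mul, Matrix.mul_one, hUU',
      RCLike.star_def, Complex.conj_conj]
  rw [key, Matrix.det_mul, Matrix.det_mul]
  have hdet : U.det * ((hermPart ((starRingEnd ℂ w) • E) - lam • 1).det) * Uᴴ.det
      = (hermPart ((starRingEnd ℂ w) • E) - lam • 1).det := by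
    have h2 : Uᴴ.det * U.det = 1 := by
      rw [← Matrix.det_mul, hUU, Matrix.det_one]
    linear_combination (hermPart ((starRingEnd ℂ w) • E) - lam • 1).det * h2
  rw [hdet]
  have hw1 : ‖w‖ = 1 := by exact hw
  have hww : (starRingEnd ℂ w) * w = 1 := by
    rw [mul_comm, Complex.mul_conj, Complex.normSq_eq_norm_sq, hw1]; norm_num
  have hre : ∀ z : ℂ, ((z.re : ℝ) : ℂ) = (z + starRingEnd ℂ z) / 2 := by
    intro z; rw [Complex.add_conj]; push_cast; ring
  have habs : ∀ z : ℂ, ((‖z‖ : ℝ) : ℂ) ^ 2 = z * starRingEnd ℂ z := by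
    intro z; rw [← Complex.ofReal_pow, ← Complex.normSq_eq_norm_sq, Complex.mul_conj]
  have hM : hermPart ((starRingEnd ℂ w) • E) - lam • 1
      = !![-lam, starRingEnd ℂ w * a, starRingEnd ℂ w * b;
           w * starRingEnd ℂ a, starRingEnd ℂ w * c + w * starRingEnd ℂ c - lam,
             starRingEnd ℂ w * d;
           w * starRingEnd ℂ b, w * starRingEnd ℂ d, -lam] := by
    ext i j
    fin_cases i <;> fin_cases j <;>
      simp [hermPart, hE, Matrix.one_apply, Matrix.vecHead, Matrix.vecTail] <;> ring
  rw [hM, Matrix.det_fin_three]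
  simp only [Matrix.cons_val', Matrix.cons_val_zero, Matrix.cons_val_one, Matrix.head_cons,
    Matrix.cons_val_two, Matrix.tail_cons, Matrix.head_fin_const, Matrix.empty_val',
    Matrix.cons_val_fin_one, Matrix.of_apply]
  simp only [hre, habs, _root_.map_mul, _root_.map_add, _root_.map_sub, _root_.map_pow,
    Complex.conj_conj, Complex.conj_ofReal]
  push_cast
  simp only [habs]
  linear_combination (lam * (a * starRingEnd ℂ a + b * starRingEnd ℂ b + d * starRingEnd ℂ d)
    + starRingEnd ℂ w * (a * d * starRingEnd ℂ b) + w * (starRingEnd ℂ a * starRingEnd ℂ d * b)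
    - starRingEnd ℂ w * (c * b * starRingEnd ℂ b)
    - w * (starRingEnd ℂ c * starRingEnd ℂ b * b)) * hww
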